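/- Let p be a prime and let R be a finite-dimensional ℚ_p-algebra. Suppose f(z) = ∑_{k≥0} a_k z^k ∈ R[[z]] is a formal power series whose coefficients tend to 0 (with respect to any ℚ_p-vector-space norm on R), so that f converges absolutely at every z ∈ ℤ_p. If f has infinitely many zeros in ℤ_p, then f is identically zero, i.e., a_k = 0 for all k. -/

import Mathlib

open Filter IsUltrametricDist

namespace StrassmanProof

variable {p : ℕ} [Fact p.Prime]

lemma summable_of_norm_tendsto {f : ℕ → ℚ_[p]}
    (h : Tendsto (fun k => ‖f k‖) atTop (nhds 0)) : Summable f :=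
  NonarchimedeanAddGroup.summable_of_tendsto_cofinite_zero
    (by rw [Nat.cofinite_eq_atTop]; exact tendsto_zero_iff_norm_tendsto_zero.mpr h)

lemma summable_aux {c : ℕ → ℚ_[p]} (h : Tendsto (fun k => ‖c k‖) atTop (nhds 0))
    {f : ℕ → ℚ_[p]} (hf : ∀ k, ‖f k‖ ≤ ‖c k‖) : Summable f :=
  summable_of_norm_tendsto (squeeze_zero_norm (fun k => by simpa using hf k) h)

lemma tendsto_shift {c : ℕ → ℚ_[p]} (h : Tendsto (fun k => ‖c k‖) atTop (nhds 0)) (m : ℕ) :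
    Tendsto (fun j => ‖c (m + j)‖) atTop (nhds 0) :=
  h.comp (tendsto_atTop_mono (fun j => Nat.le_add_left j m) tendsto_id)

lemma norm_z_mul_le {z : ℤ_[p]} (x : ℚ_[p]) (k : ℕ) :
    ‖(z : ℚ_[p]) ^ k * x‖ ≤ ‖x‖ := by
  rw [norm_mul, norm_pow]
  calc ‖(z : ℚ_[p])‖ ^ k * ‖x‖ ≤ 1 ^ k * ‖x‖ := by gcongr; exact z.2
  _ = ‖x‖ := by rw [one_pow, one_mul]

lemma summable_z {c : ℕ → ℚ_[p]} (h : Tendsto (fun k => ‖c k‖) atTop (nhds 0)) (z : ℤ_[p]) :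
    Summable (fun k => (z : ℚ_[p]) ^ k * c k) :=
  summable_aux h fun k => norm_z_mul_le _ _

lemma tail_bound {c : ℕ → ℚ_[p]} (h : Tendsto (fun k => ‖c k‖) atTop (nhds 0)) (N : ℕ)
    (hlt : ∀ k, N < k → ‖c k‖ < ‖c N‖) :
    ∃ r : ℝ, 0 ≤ r ∧ r < ‖c N‖ ∧ ∀ k, N < k → ‖c k‖ ≤ r := by
  have hN : 0 < ‖c N‖ := (norm_nonneg (c (N + 1))).trans_lt (hlt (N + 1) (by omega))
  obtain ⟨K, hK⟩ := eventually_atTop.mp (h.eventually_lt_const (half_pos hN))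
  have hs : (Finset.range (K + 1)).Nonempty := ⟨0, by simp⟩
  set g : ℕ → ℝ := fun k => if N < k then ‖c k‖ else 0 with hg
  refine ⟨max (‖c N‖ / 2) ((Finset.range (K + 1)).sup' hs g), ?_, ?_, ?_⟩
  · exact le_trans (by positivity) (le_max_left _ _)
  · refine max_lt (by linarith) ((Finset.sup'_lt_iff hs).mpr fun k _ => ?_)
    by_cases hk : N < k
    · simpa [hg, hk] using hlt k hk
    · simpa [hg, hk] using hN
  · intro k hk
    by_cases hkK : k ≤ K
    · refine le_trans ?_ (le_max_right _ _)
      have hgk : ‖c k‖ = g k := by simp [hg, hk]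
      rw [hgk]
      exact Finset.le_sup' g (Finset.mem_range.mpr (by omega))
    · exact le_trans (hK k (by omega)).le (le_max_left _ _)

lemma summable_of_norm_le_tendsto {f : ℕ → ℚ_[p]} {g : ℕ → ℝ} (hb : ∀ n, ‖f n‖ ≤ g n)
    (hg : Tendsto g atTop (nhds 0)) : Summable f :=
  NonarchimedeanAddGroup.summable_of_tendsto_cofinite_zero
    (by rw [Nat.cofinite_eq_atTop]; exact squeeze_zero_norm hb hg)

lemma factor {c : ℕ → ℚ_[p]} (h : Tendsto (fun k => ‖c k‖) atTop (nhds 0)) (z α : ℤ_[p]) :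
    (∑' k : ℕ, (z : ℚ_[p]) ^ k * c k) - (∑' k : ℕ, (α : ℚ_[p]) ^ k * c k)
      = ((z : ℚ_[p]) - (α : ℚ_[p])) *
        ∑' k : ℕ, (z : ℚ_[p]) ^ k * ∑' j : ℕ, (α : ℚ_[p]) ^ j * c (k + 1 + j) := by
  have tendsto_shift : ∀ (m : ℕ), Tendsto (fun j => ‖c (m + j)‖) atTop (nhds 0) :=
    fun m => h.comp (tendsto_atTop_mono (fun j => Nat.le_add_left j m) tendsto_id)
  set Z : ℚ_[p] := (z : ℚ_[p]) with hZdef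
  set A : ℚ_[p] := (α : ℚ_[p]) with hAdef
  have hZ : ‖Z‖ ≤ 1 := z.2
  have hA : ‖A‖ ≤ 1 := α.2
  set u : ℕ × ℕ → ℚ_[p] := fun q => (Z - A) * (Z ^ q.1 * (A ^ q.2 * c (q.1 + 1 + q.2)))
    with hu_def
  have hnorm_u : ∀ q : ℕ × ℕ, ‖u q‖ ≤ ‖Z - A‖ * ‖c (q.1 + 1 + q.2)‖ := by
    intro q
    calc ‖u q‖ = ‖Z - A‖ * (‖Z‖ ^ q.1 * (‖A‖ ^ q.2 * ‖c (q.1 + 1 + q.2)‖)) := by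
          simp only [hu_def, norm_mul, norm_pow]
    _ ≤ ‖Z - A‖ * (1 ^ q.1 * (1 ^ q.2 * ‖c (q.1 + 1 + q.2)‖)) := by gcongr
    _ = ‖Z - A‖ * ‖c (q.1 + 1 + q.2)‖ := by rw [one_pow, one_pow, one_mul, one_mul]
  have hm : Tendsto (fun q : ℕ × ℕ => q.1 + 1 + q.2) cofinite atTop := by
    rw [Filter.tendsto_atTop]
    intro b
    rw [Filter.eventually_cofinite]
    apply Set.Finite.subset ((Set.finite_Iio b).prod (Set.finite_Iio b))
    intro q hq
    simp only [Set.mem_setOf_eq, not_le] at hq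
    constructor <;> · simp only [Set.mem_Iio]; omega
  have hu : Summable u := by
    apply NonarchimedeanAddGroup.summable_of_tendsto_cofinite_zero
    apply squeeze_zero_norm hnorm_u
    simpa using (h.comp hm).const_mul ‖Z - A‖
  have hfib1 : ∀ k, Summable fun j => u (k, j) := by
    intro k
    apply summable_of_norm_le_tendsto (fun j => hnorm_u (k, j))
    simpa using (tendsto_shift (k + 1)).const_mul ‖Z - A‖
  set v : ℕ × ℕ → ℚ_[p] := fun q =>
      if q.2 < q.1 then (Z - A) * (Z ^ q.2 * (A ^ (q.1 - 1 - q.2) * c q.1)) else 0 with hv_def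
  set e : ℕ × ℕ → ℕ × ℕ := fun q => (q.1 + 1 + q.2, q.1) with he_def
  have he_inj : Function.Injective e := by
    intro a b hab
    simp only [he_def, Prod.mk.injEq] at hab
    have h1 : a.1 = b.1 := hab.2
    have h2 : a.2 = b.2 := by omega
    exact Prod.ext h1 h2
  have hvzero : ∀ m k, ¬ k < m → v (m, k) = 0 := by
    intro m k hk
    simp only [hv_def]
    exact if_neg hk
  have hrange : ∀ q ∉ Set.range e, v q = 0 := by
    intro q hq
    by_cases hlt : q.2 < q.1
    · exfalso
      refine hq ⟨(q.2, q.1 - 1 - q.2), ?_⟩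
      have h1 : q.2 + 1 + (q.1 - 1 - q.2) = q.1 := by omega
      show (q.2 + 1 + (q.1 - 1 - q.2), q.2) = q
      rw [h1]
    · exact hvzero q.1 q.2 hlt
  have hve : ∀ q : ℕ × ℕ, v (e q) = u q := by
    intro q
    have h1 : q.1 + 1 + q.2 - 1 - q.1 = q.2 := by omega
    show (if q.1 < q.1 + 1 + q.2 then
        (Z - A) * (Z ^ q.1 * (A ^ (q.1 + 1 + q.2 - 1 - q.1) * c (q.1 + 1 + q.2))) else 0) = u q
    rw [if_pos (by omega), h1]
  have hv : Summable v := by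
    rw [← he_inj.summable_iff hrange]
    exact hu.congr fun q => (hve q).symm
  have hsum_eq : ∑' q, u q = ∑' q, v q := by
    rw [show (∑' q, u q) = ∑' q, v (e q) from tsum_congr fun q => (hve q).symm]
    exact he_inj.tsum_eq (Function.support_subset_iff'.mpr hrange)
  have hfib2 : ∀ m, Summable fun k => v (m, k) :=
    fun m => summable_of_ne_finset_zero (s := Finset.range m)
      (fun k hk => hvzero m k (by simpa using hk))
  have hinner : ∀ m, ∑' k, v (m, k) = (Z ^ m - A ^ m) * c m := by
    intro m
    rw [tsum_eq_sum (s := Finset.range m) (fun k hk => hvzero m k (by simpa using hk))]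
    have hterm : ∀ k ∈ Finset.range m,
        v (m, k) = (Z ^ k * A ^ (m - 1 - k)) * ((Z - A) * c m) := by
      intro k hk
      simp only [hv_def]
      rw [if_pos (Finset.mem_range.mp hk)]
      ring
    rw [Finset.sum_congr rfl hterm, ← Finset.sum_mul, ← mul_assoc, geom_sum₂_mul]
  have hd : ∀ k, (Z - A) * (Z ^ k * ∑' j, A ^ j * c (k + 1 + j)) = ∑' j, u (k, j) := by
    intro k
    show _ = ∑' j, (Z - A) * (Z ^ k * (A ^ j * c (k + 1 + j)))
    rw [tsum_mul_left (a := Z - A), tsum_mul_left (a := Z ^ k)]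
  calc (∑' k : ℕ, Z ^ k * c k) - ∑' k : ℕ, A ^ k * c k
      = ∑' m, (Z ^ m * c m - A ^ m * c m) := by
        rw [Summable.tsum_sub (summable_z h z) (summable_z h α)]
    _ = ∑' m, (Z ^ m - A ^ m) * c m := tsum_congr fun m => by ring
    _ = ∑' m, ∑' k, v (m, k) := tsum_congr fun m => (hinner m).symm
    _ = ∑' q, v q := (Summable.tsum_prod' hv hfib2).symm
    _ = ∑' q, u q := hsum_eq.symm
    _ = ∑' k, ∑' j, u (k, j) := Summable.tsum_prod' hu hfib1
    _ = ∑' k, (Z - A) * (Z ^ k * ∑' j, A ^ j * c (k + 1 + j)) := tsum_congr fun k => (hd k).symm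
    _ = (Z - A) * ∑' k, Z ^ k * ∑' j, A ^ j * c (k + 1 + j) := tsum_mul_left

lemma strassAux : ∀ (N : ℕ) (c : ℕ → ℚ_[p]),
    Tendsto (fun k => ‖c k‖) atTop (nhds 0) →
    (∀ k, ‖c k‖ ≤ ‖c N‖) → (∀ k, N < k → ‖c k‖ < ‖c N‖) →
    ¬ {z : ℤ_[p] | (∑' k : ℕ, (z : ℚ_[p]) ^ k * c k) = 0}.Infinite := by
  intro N
  induction N with
  | zero =>
    intro c h _ hlt hinf
    obtain ⟨α, hα⟩ := hinf.nonempty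
    simp only [Set.mem_setOf_eq] at hα
    obtain ⟨r, hr0, hrlt, hrb⟩ := tail_bound h 0 hlt
    rw [Summable.tsum_eq_zero_add (summable_z h α)] at hα
    simp only [pow_zero, one_mul] at hα
    have h1 : c 0 = -∑' k : ℕ, (α : ℚ_[p]) ^ (k + 1) * c (k + 1) :=
      eq_neg_of_add_eq_zero_left hα
    have h2 : ‖c 0‖ ≤ r := by
      rw [h1, norm_neg]
      exact norm_tsum_le_of_forall_le_of_nonneg hr0
        (fun k => (norm_z_mul_le _ _).trans (hrb (k + 1) (by omega)))
    exact absurd (h2.trans_lt hrlt) (lt_irrefl _)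
  | succ N ih =>
    intro c h hle hlt hinf
    obtain ⟨α, hα⟩ := hinf.nonempty
    simp only [Set.mem_setOf_eq] at hα
    obtain ⟨r, hr0, hrlt, hrb⟩ := tail_bound h (N + 1) hlt
    set d : ℕ → ℚ_[p] := fun k => ∑' j : ℕ, (α : ℚ_[p]) ^ j * c (k + 1 + j) with hd_def
    have hd_norm_le : ∀ (k : ℕ) (s : ℝ), 0 ≤ s → (∀ m, k + 1 ≤ m → ‖c m‖ ≤ s) → ‖d k‖ ≤ s := by
      intro k s hs0 hms
      apply norm_tsum_le_of_forall_le_of_nonneg hs0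
      intro j
      exact (norm_z_mul_le _ _).trans (hms _ (by omega))
    have hd0 : Tendsto (fun k => ‖d k‖) atTop (nhds 0) := by
      rw [Metric.tendsto_atTop] at h ⊢
      intro ε hε
      obtain ⟨K, hK⟩ := h (ε / 2) (half_pos hε)
      refine ⟨K, fun k hk => ?_⟩
      have hb : ‖d k‖ ≤ ε / 2 := by
        refine hd_norm_le k (ε / 2) (by positivity) (fun m hm => ?_)
        have := hK m (by omega)
        rw [Real.dist_eq, sub_zero, abs_of_nonneg (norm_nonneg _)] at this
        exact this.le
      rw [Real.dist_eq, sub_zero, abs_of_nonneg (norm_nonneg _)]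
      linarith
    have hsd : Summable (fun j => (α : ℚ_[p]) ^ j * c (N + 1 + j)) :=
      summable_of_norm_le_tendsto (fun j => norm_z_mul_le _ _) (tendsto_shift h (N + 1))
    have hdN : ‖d N‖ = ‖c (N + 1)‖ := by
      have hsplit : d N = c (N + 1) + ∑' j : ℕ, (α : ℚ_[p]) ^ (j + 1) * c (N + 1 + (j + 1)) := by
        rw [hd_def]
        simp only
        rw [Summable.tsum_eq_zero_add hsd]
        simp only [pow_zero, one_mul, Nat.add_zero]
      have hTle : ‖∑' j : ℕ, (α : ℚ_[p]) ^ (j + 1) * c (N + 1 + (j + 1))‖ ≤ r :=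
        norm_tsum_le_of_forall_le_of_nonneg hr0
          (fun j => (norm_z_mul_le _ _).trans (hrb _ (by omega)))
      rw [hsplit, norm_add_eq_max_of_norm_ne_norm (ne_of_gt (hTle.trans_lt hrlt))]
      exact max_eq_left (hTle.trans hrlt.le)
    have hdle : ∀ k, ‖d k‖ ≤ ‖d N‖ := by
      intro k
      rw [hdN]
      exact hd_norm_le k _ (norm_nonneg _) (fun m _ => hle m)
    have hdlt : ∀ k, N < k → ‖d k‖ < ‖d N‖ := by
      intro k hk
      rw [hdN]
      exact (hd_norm_le k r hr0 (fun m hm => hrb m (by omega))).trans_lt hrlt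
    have hsub : {z : ℤ_[p] | (∑' k : ℕ, (z : ℚ_[p]) ^ k * c k) = 0} \ {α} ⊆
        {z : ℤ_[p] | (∑' k : ℕ, (z : ℚ_[p]) ^ k * d k) = 0} := by
      rintro z ⟨hz1, hz2⟩
      simp only [Set.mem_setOf_eq] at hz1 ⊢
      simp only [Set.mem_singleton_iff] at hz2
      have hzero : ((z : ℚ_[p]) - (α : ℚ_[p])) *
          (∑' k : ℕ, (z : ℚ_[p]) ^ k * ∑' j : ℕ, (α : ℚ_[p]) ^ j * c (k + 1 + j)) = 0 := by
        rw [← factor h z α, hz1, hα, sub_zero]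
      rcases mul_eq_zero.mp hzero with h' | h'
      · exact absurd (Subtype.coe_injective (sub_eq_zero.mp h')) hz2
      · exact h'
    exact ih d hd0 hdle hdlt ((hinf.diff (Set.finite_singleton α)).mono hsub)

theorem strassman_qp {c : ℕ → ℚ_[p]} (h : Tendsto (fun k => ‖c k‖) atTop (nhds 0))
    (hinf : {z : ℤ_[p] | (∑' k : ℕ, (z : ℚ_[p]) ^ k * c k) = 0}.Infinite) : ∀ k, c k = 0 := by
  by_contra hne
  push_neg at hne
  obtain ⟨k₀, hk₀⟩ := hne
  have hk0 : 0 < ‖c k₀‖ := norm_pos_iff.mpr hk₀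
  obtain ⟨K, hK⟩ := eventually_atTop.mp (h.eventually_lt_const hk0)
  have hk₀K : k₀ < K := by
    by_contra hcon
    exact absurd (hK k₀ (by omega)) (lt_irrefl _)
  have hs : (Finset.range K).Nonempty := ⟨k₀, Finset.mem_range.mpr hk₀K⟩
  set M : ℝ := (Finset.range K).sup' hs (fun k => ‖c k‖) with hM
  set T : Finset ℕ := (Finset.range K).filter (fun k => ‖c k‖ = M) with hT
  have hT_ne : T.Nonempty := by
    obtain ⟨i, hi, hieq⟩ := Finset.exists_mem_eq_sup' hs (fun k => ‖c k‖)
    exact ⟨i, Finset.mem_filter.mpr ⟨hi, hieq.symm⟩⟩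
  set N := T.max' hT_ne with hN
  have hNT : N ∈ T := T.max'_mem hT_ne
  have hNK : N ∈ Finset.range K := (Finset.mem_filter.mp hNT).1
  have hNM : ‖c N‖ = M := (Finset.mem_filter.mp hNT).2
  have hk₀M : ‖c k₀‖ ≤ M := Finset.le_sup' (fun k => ‖c k‖) (Finset.mem_range.mpr hk₀K)
  have h1 : ∀ k, ‖c k‖ ≤ ‖c N‖ := by
    intro k
    rw [hNM]
    by_cases hkK : k < K
    · exact Finset.le_sup' (fun k => ‖c k‖) (Finset.mem_range.mpr hkK)
    · exact le_trans (hK k (by omega)).le hk₀M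
  have h2 : ∀ k, N < k → ‖c k‖ < ‖c N‖ := by
    intro k hk
    rw [hNM]
    by_cases hkK : k < K
    · rcases (Finset.le_sup' (fun k => ‖c k‖)
          (Finset.mem_range.mpr hkK) : ‖c k‖ ≤ M).lt_or_eq with h' | h'
      · exact h'
      · exact absurd (T.le_max' k (Finset.mem_filter.mpr ⟨Finset.mem_range.mpr hkK, h'⟩))
          (by omega)
    · exact lt_of_lt_of_le (hK k (by omega)) hk₀M
  exact strassAux N c h h1 h2 hinf

end StrassmanProof

open Filter StrassmanProof in
/-- **Extended Strassman theorem (Theorem 2.4).** Let `p` be a prime and `R` a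
finite-dimensional normed `ℚ_p`-algebra. Suppose `f(z) = ∑ aₖ zᵏ ∈ R[[z]]` has
coefficients tending to `0` in norm (so that the series converges at every
`z ∈ ℤ_p`). If `f` has infinitely many zeros in `ℤ_p`, then `f` is identically
zero, i.e. `aₖ = 0` for all `k`. -/
theorem stmt7 (p : ℕ) [Fact p.Prime] (R : Type*) [NormedCommRing R]
    [NormedAlgebra ℚ_[p] R] [FiniteDimensional ℚ_[p] R]
    (a : ℕ → R)
    (ha : Filter.Tendsto (fun k => ‖a k‖) Filter.atTop (nhds 0))
    (hz : {z : ℤ_[p] | (∑' k : ℕ, ((z : ℚ_[p]) ^ k) • a k) = 0}.Infinite) :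
    ∀ k : ℕ, a k = 0 := by
  set n := Module.finrank ℚ_[p] R with hn
  set b : Module.Basis (Fin n) ℚ_[p] R := Module.finBasis ℚ_[p] R with hb
  set e : R ≃L[ℚ_[p]] (Fin n → ℚ_[p]) := b.equivFun.toContinuousLinearEquiv with he
  have ha0 : Tendsto a atTop (nhds 0) := tendsto_zero_iff_norm_tendsto_zero.mpr ha
  set c : Fin n → ℕ → ℚ_[p] := fun i k => e (a k) i with hc_def
  have hc : ∀ i, Tendsto (fun k => ‖c i k‖) atTop (nhds 0) := by
    intro i
    rw [← tendsto_zero_iff_norm_tendsto_zero]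
    have h1 : Tendsto (fun k => e (a k)) atTop (nhds (e 0)) :=
      (e.continuous.tendsto 0).comp ha0
    rw [map_zero] at h1
    have h2 := (continuous_apply i).tendsto (0 : Fin n → ℚ_[p]) |>.comp h1
    exact h2
  have hsummable : ∀ z : ℤ_[p], Summable (fun k => ((z : ℚ_[p]) ^ k) • a k) := by
    intro z
    have hS' : Summable (fun k => e (((z : ℚ_[p]) ^ k) • a k)) := by
      rw [Pi.summable]
      intro i
      have heq : (fun k => e (((z : ℚ_[p]) ^ k) • a k) i)
          = fun k => (z : ℚ_[p]) ^ k * c i k := by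
        funext k
        rw [map_smul]
        simp [smul_eq_mul, hc_def]
      rw [heq]
      exact summable_z (hc i) z
    have := hS'.map (e.symm : (Fin n → ℚ_[p]) →L[ℚ_[p]] R) (e.symm.continuous)
    exact this.congr fun k => by simp [Function.comp]
  have key : ∀ i k, c i k = 0 := by
    intro i
    apply strassman_qp (hc i)
    refine hz.mono ?_
    intro z hzmem
    simp only [Set.mem_setOf_eq] at hzmem ⊢
    have hmap := (e : R →L[ℚ_[p]] (Fin n → ℚ_[p])).map_tsum (hsummable z)
    rw [hzmem, map_zero] at hmap
    have happ := congrFun hmap.symm i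
    rw [tsum_apply (Pi.summable.mpr ?_)] at happ
    · rw [show (fun k => ((e : R →L[ℚ_[p]] (Fin n → ℚ_[p])) (((z : ℚ_[p]) ^ k) • a k)) i)
          = fun k => (z : ℚ_[p]) ^ k * c i k from funext fun k => by
            simp [smul_eq_mul, hc_def]] at happ
      · simpa using happ
    · intro j
      have heq : (fun k => (e : R →L[ℚ_[p]] (Fin n → ℚ_[p])) (((z : ℚ_[p]) ^ k) • a k) j)
          = fun k => (z : ℚ_[p]) ^ k * c j k := funext fun k => by simp [smul_eq_mul, hc_def]
      rw [heq]
      exact summable_z (hc j) z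
  intro k
  have h0 : e (a k) = 0 := funext fun i => key i k
  have := congrArg e.symm h0
  simpa using this
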